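/- Prune propagation time: if a vertex crashes, creating a faulty tree T of its non-crashed descendants, then any particle at depth d in T is pruned (clears its parent pointer and becomes idle) within at most d asynchronous rounds after the crash. -/
import Mathlib

/-- Prune propagation time: in a faulty tree (whose root `r`, at depth 1, is
the child of the crashed vertex), where in every asynchronous round the root gets pruned and
any vertex whose parent is already pruned gets pruned, every vertex at depth `d` is pruned
within at most `d` asynchronous rounds after the crash. -/
theorem prune_within_depth_rounds {V : Type} (parent : V → V) (r : V)
    (dep : V → ℕ) (hdr : dep r = 1)
    (hdep : ∀ v, v ≠ r → dep v = dep (parent v) + 1)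
    (hreach : ∀ v, ∃ m : ℕ, parent^[m] v = r)
    (pruned : ℕ → V → Prop)
    (hp0 : ∀ v, ¬ pruned 0 v)
    (hmono : ∀ t v, pruned t v → pruned (t + 1) v)
    (hstep : ∀ t v, (v = r ∨ pruned t (parent v)) → pruned (t + 1) v) :
    ∀ v, pruned (dep v) v := by
  have key : ∀ n v, dep v = n → pruned n v := by
    intro n
    induction n using Nat.strong_induction_on with
    | _ n ih =>
      intro v hv
      by_cases hvr : v = r
      · rw [hvr, hdr] at hv
        subst hv
        rw [hvr]
        exact hstep 0 r (Or.inl rfl)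
      · have h1 : dep v = dep (parent v) + 1 := hdep v hvr
        rw [hv] at h1
        subst h1
        exact hstep _ v (Or.inr (ih _ (Nat.lt_succ_self _) _ rfl))
  exact fun v => key _ v rfl
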